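/- Let P be a real polynomial, let a < b be real numbers, let k ≥ 1 be an integer, and let λ ∈ (0,1). Let q_0, …, q_n denote the coefficients of Q(x) := P(a + (b−a)·x), so that q_i = P^{(i)}(a)·(b−a)^i / i!. If P(a + λ·(b−a)) = 0, then there exists ξ ∈ (a, a + λ(b−a)) such that Σ_{i=0}^{k−1} q_i·λ^i + (P^{(k)}(ξ)·(b−a)^k / k!)·λ^k = 0; in other words, λ is a root of the polynomial F_ξ(x) := Σ_{i=0}^{k−1} q_i·x^i + (P^{(k)}(ξ)·(b−a)^k / k!)·x^k. -/

import Mathlib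

open Polynomial

lemma poly_contDiff (P : Polynomial ℝ) {n : ℕ} : ContDiff ℝ n fun y : ℝ => P.eval y := by
  induction P using Polynomial.induction_on' with
  | add p q hp hq => simpa using hp.add hq
  | monomial m c => simpa [Polynomial.eval_monomial] using
      (contDiff_const (c := c)).mul ((contDiff_id (𝕜 := ℝ)).pow m)

lemma poly_iteratedDerivWithin (s : Set ℝ) (hs : UniqueDiffOn ℝ s) :
    ∀ (n : ℕ) (P : Polynomial ℝ), ∀ x ∈ s,
      iteratedDerivWithin n (fun y => P.eval y) s x = (derivative^[n] P).eval x := by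
  intro n
  induction n with
  | zero => intro P x hx; simp
  | succ n ih =>
    intro P x hx
    rw [iteratedDerivWithin_succ']
    have h1 : Set.EqOn (derivWithin (fun y => P.eval y) s)
        (fun y => (derivative P).eval y) s := by
      intro y hy
      exact (P.hasDerivAt y).hasDerivWithinAt.derivWithin (hs y hy)
    have := iteratedDerivWithin_congr (n := n) h1 hx
    rw [this, ih (derivative P) x hx, ← Function.iterate_succ_apply]

/-- Lagrange form of the Taylor remainder applied to `Q(x) = P(a + (b-a)x)`: any root
`a + λ(b-a)` of `P` with `λ ∈ (0,1)` yields a `ξ ∈ (a, a + λ(b-a))` such that `λ` is a root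
of the degree-`k` truncation `F_ξ`. -/
theorem truncated_taylor_root
    (P : Polynomial ℝ) (a b : ℝ) (hab : a < b) (k : ℕ) (hk : 1 ≤ k)
    (lam : ℝ) (hlam : lam ∈ Set.Ioo (0 : ℝ) 1)
    (q : ℕ → ℝ)
    (hq : ∀ i, q i = (derivative^[i] P).eval a * (b - a) ^ i / (Nat.factorial i))
    (hroot : P.eval (a + lam * (b - a)) = 0) :
    ∃ ξ ∈ Set.Ioo a (a + lam * (b - a)),
      (∑ i ∈ Finset.range k, q i * lam ^ i)
        + ((derivative^[k] P).eval ξ * (b - a) ^ k / (Nat.factorial k)) * lam ^ k = 0 := by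
  set c := a + lam * (b - a) with hc
  have hac : a < c := by
    have : 0 < lam * (b - a) := mul_pos hlam.1 (by linarith)
    linarith [this]
  have hud : UniqueDiffOn ℝ (Set.Icc a c) := uniqueDiffOn_Icc hac
  obtain ⟨n, rfl⟩ : ∃ n, k = n + 1 := ⟨k - 1, (Nat.succ_pred_eq_of_pos hk).symm⟩
  have hf : ContDiffOn ℝ n (fun y => P.eval y) (Set.Icc a c) :=
    (poly_contDiff P).contDiffOn
  have hf' : DifferentiableOn ℝ
      (iteratedDerivWithin n (fun y => P.eval y) (Set.Icc a c)) (Set.Ioo a c) := by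
    apply DifferentiableOn.congr
      (f := fun y => (derivative^[n] P).eval y)
      ((derivative^[n] P).differentiable.differentiableOn)
    intro y hy
    exact poly_iteratedDerivWithin _ hud n P y (Set.mem_Icc_of_Ioo hy)
  obtain ⟨ξ, hξ, heq⟩ := taylor_mean_remainder_lagrange hac.ne
    (by rwa [Set.uIcc_of_le hac.le]) (by rwa [Set.uIcc_of_le hac.le, Set.uIoo_of_lt hac])
  rw [Set.uIcc_of_le hac.le] at heq
  rw [Set.uIoo_of_lt hac] at hξ
  refine ⟨ξ, hξ, ?_⟩
  rw [hroot, zero_sub, taylor_within_apply] at heq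
  have hsum : ∀ i ∈ Finset.range (n + 1),
      ((i.factorial : ℝ)⁻¹ * (c - a) ^ i) • iteratedDerivWithin i (fun y => P.eval y)
        (Set.Icc a c) a = q i * lam ^ i := by
    intro i _
    rw [poly_iteratedDerivWithin _ hud i P a (Set.left_mem_Icc.mpr hac.le), hq i]
    have : c - a = lam * (b - a) := by rw [hc]; ring
    rw [this, mul_pow, smul_eq_mul]
    field_simp
  rw [Finset.sum_congr rfl hsum] at heq
  have hxi : iteratedDerivWithin (n + 1) (fun y => P.eval y) (Set.Icc a c) ξ
      = (derivative^[n + 1] P).eval ξ :=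
    poly_iteratedDerivWithin _ hud (n + 1) P ξ (Set.mem_Icc_of_Ioo hξ)
  rw [hxi] at heq
  have hca : c - a = lam * (b - a) := by rw [hc]; ring
  rw [hca, mul_pow] at heq
  have : ((n + 1).factorial : ℝ) ≠ 0 := Nat.cast_ne_zero.mpr (n + 1).factorial_ne_zero
  field_simp at heq ⊢
  linarith [heq]
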